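/- Let q₁, q₂ be coprime positive integers and N a positive integer. Then there exist integers x₁, x₂ and an integer n with 1 ≤ n ≤ N such that x₁q₁ + x₂q₂ = n², |x₂| ≤ H(q₁)·q₁²/N², and |x₁| ≤ N²/q₁ + (q₂/q₁)·|x₂|, where H(q₁) denotes the smallest positive integer h such that every residue class x coprime to q₁ can be written as x ≡ y·z² (mod q₁) with |y| ≤ h and y, z integers. -/

import Mathlib

/-- `H k` is the smallest positive integer `h` such that every residue class `x` coprime
to `k` can be written as `x ≡ y·z² (mod k)` with `|y| ≤ h`. -/
noncomputable def Hfun (k : ℕ) : ℕ :=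
  sInf {h : ℕ | 0 < h ∧ ∀ x : ℤ, Int.gcd x k = 1 →
    ∃ y z : ℤ, |y| ≤ (h : ℤ) ∧ (x : ZMod k) = (y : ZMod k) * (z : ZMod k) ^ 2}

lemma Hfun_mem (k : ℕ) (hk : 0 < k) :
    Hfun k ∈ {h : ℕ | 0 < h ∧ ∀ x : ℤ, Int.gcd x k = 1 →
      ∃ y z : ℤ, |y| ≤ (h : ℤ) ∧ (x : ZMod k) = (y : ZMod k) * (z : ZMod k) ^ 2} := by
  apply Nat.sInf_mem
  refine ⟨k, hk, fun x _ => ⟨x % k, 1, ?_, ?_⟩⟩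
  · have h1 : 0 ≤ x % k := Int.emod_nonneg x (by exact_mod_cast hk.ne')
    have h2 : x % k < k := Int.emod_lt_of_pos x (by exact_mod_cast hk)
    rw [abs_of_nonneg h1]; exact h2.le
  · have : ((x % (k : ℤ) : ℤ) : ZMod k) = (x : ZMod k) := by
      have : ((k : ℤ) : ZMod k) = 0 := by
        simpa using (ZMod.intCast_zmod_eq_zero_iff_dvd (k : ℤ) k).mpr dvd_rfl
      conv_rhs => rw [← Int.emod_add_mul_ediv x k]
      push_cast [this]
      ring
    rw [this]; ring

/-- helper bound for `x₁`. -/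
lemma x1_bound (q₁ q₂ N : ℕ) (hq₁ : 0 < q₁) (x₁ x₂ s : ℤ)
    (h : x₁ * q₁ = s - x₂ * q₂) (hs : |(s : ℝ)| ≤ (N : ℝ) ^ 2) :
    |(x₁ : ℝ)| ≤ (N : ℝ) ^ 2 / (q₁ : ℝ) + ((q₂ : ℝ) / (q₁ : ℝ)) * |(x₂ : ℝ)| := by
  have hq₁R : (0 : ℝ) < q₁ := by exact_mod_cast hq₁
  have key : |(x₁ : ℝ)| * q₁ ≤ (N : ℝ) ^ 2 + (q₂ : ℝ) * |(x₂ : ℝ)| := by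
    have h' : (x₁ : ℝ) * q₁ = (s : ℝ) - (x₂ : ℝ) * q₂ := by exact_mod_cast h
    have h1 : |(x₁ : ℝ)| * q₁ = |(s : ℝ) - (x₂ : ℝ) * q₂| := by
      rw [← h', abs_mul, abs_of_nonneg hq₁R.le]
    have h2 : |(s : ℝ) - (x₂ : ℝ) * q₂| ≤ |(s : ℝ)| + |(x₂ : ℝ)| * q₂ := by
      calc _ ≤ |(s : ℝ)| + |(x₂ : ℝ) * (q₂ : ℝ)| := abs_sub _ _
        _ = _ := by rw [abs_mul, abs_of_nonneg (by positivity : (0:ℝ) ≤ (q₂:ℝ))]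
    nlinarith [hs]
  have : ((N : ℝ) ^ 2 + (q₂ : ℝ) * |(x₂ : ℝ)|) / q₁ =
      (N : ℝ) ^ 2 / (q₁ : ℝ) + ((q₂ : ℝ) / (q₁ : ℝ)) * |(x₂ : ℝ)| := by ring
  rw [← this, le_div_iff₀ hq₁R]
  linarith [key]

/-- Zaharescu's construction of a small square `x₁q₁ + x₂q₂ = n²` with
`|x₂| ≤ H(q₁)·q₁²/N²` and `|x₁| ≤ N²/q₁ + (q₂/q₁)·|x₂|`. -/
theorem small_square_in_progression (q₁ q₂ N : ℕ) (hq₁ : 0 < q₁) (hq₂ : 0 < q₂)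
    (hN : 0 < N) (hcop : Nat.Coprime q₁ q₂) :
    ∃ x₁ x₂ n : ℤ, 1 ≤ n ∧ n ≤ (N : ℤ) ∧ x₁ * q₁ + x₂ * q₂ = n ^ 2 ∧
      |(x₂ : ℝ)| ≤ (Hfun q₁ : ℝ) * (q₁ : ℝ) ^ 2 / (N : ℝ) ^ 2 ∧
      |(x₁ : ℝ)| ≤ (N : ℝ) ^ 2 / (q₁ : ℝ) + ((q₂ : ℝ) / (q₁ : ℝ)) * |(x₂ : ℝ)| := by
  have hq₁R : (0 : ℝ) < q₁ := by exact_mod_cast hq₁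
  have hNR : (0 : ℝ) < N := by exact_mod_cast hN
  obtain ⟨hHpos, hHprop⟩ := Hfun_mem q₁ hq₁
  have hH1R : (1 : ℝ) ≤ Hfun q₁ := by exact_mod_cast hHpos
  rcases le_or_gt q₁ N with hle | hlt
  · -- trivial case: take n = q₁, x₁ = q₁, x₂ = 0
    refine ⟨(q₁ : ℤ), 0, (q₁ : ℤ), by exact_mod_cast hq₁, by exact_mod_cast hle,
      by push_cast; ring, ?_, ?_⟩
    · simp only [Int.cast_zero, abs_zero]
      positivity
    · simp only [Int.cast_zero, abs_zero, Int.cast_natCast, mul_zero, add_zero,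
        Nat.abs_cast]
      rw [le_div_iff₀ hq₁R]
      have : (q₁ : ℝ) ≤ N := by exact_mod_cast hle
      nlinarith
  · -- now N < q₁
    obtain ⟨a, b, hab⟩ : IsCoprime (q₁ : ℤ) (q₂ : ℤ) := by
      rw [Nat.isCoprime_iff_coprime]; exact hcop
    rcases eq_or_lt_of_le (Nat.succ_le_of_lt hN) with hN1 | hN2
    · -- case N = 1 : Bézout
      subst hN1
      set x₂ : ℤ := b % q₁ with hx₂def
      have hdm := Int.mul_ediv_add_emod b (q₁ : ℤ)
      refine ⟨a + (b / q₁) * q₂, x₂, 1, le_refl _, by norm_num, by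
        push_cast; nlinarith [hdm], ?_, ?_⟩
      · have h1 : 0 ≤ x₂ := Int.emod_nonneg b (by exact_mod_cast hq₁.ne')
        have h2 : x₂ < q₁ := Int.emod_lt_of_pos b (by exact_mod_cast hq₁)
        have h1R : (0:ℝ) ≤ (x₂ : ℝ) := by exact_mod_cast h1
        have h2R : (x₂ : ℝ) ≤ q₁ := by exact_mod_cast h2.le
        rw [abs_of_nonneg h1R]
        push_cast
        rw [one_pow, div_one]
        have hq₁1 : (1:ℝ) ≤ q₁ := by exact_mod_cast hq₁
        nlinarith [mul_nonneg (sub_nonneg.mpr hq₁1) hq₁R.le,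
          mul_le_mul_of_nonneg_right hH1R (by positivity : (0:ℝ) ≤ (q₁:ℝ)^2)]
      · refine x1_bound q₁ q₂ 1 hq₁ _ _ 1 (by nlinarith [hdm]) (by norm_num)
    · -- case 2 ≤ N < q₁ : Dirichlet construction
      haveI : NeZero q₁ := ⟨hq₁.ne'⟩
      -- b is coprime to q₁
      have hbcop : Int.gcd b q₁ = 1 := by
        rw [← Int.isCoprime_iff_gcd_eq_one]
        exact ⟨q₂, a, by linarith [hab]⟩
      obtain ⟨y, z, hy, hyz⟩ := hHprop b hbcop
      -- in ZMod q₁ : b * q₂ = 1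
      have hq₁0 : ((q₁ : ℤ) : ZMod q₁) = 0 := by
        simpa using (ZMod.intCast_zmod_eq_zero_iff_dvd (q₁ : ℤ) q₁).mpr dvd_rfl
      have hbq : (b : ZMod q₁) * (q₂ : ZMod q₁) = 1 := by
        have := congrArg (fun t : ℤ => (t : ZMod q₁)) hab
        push_cast at this
        rw [ZMod.natCast_self] at this
        simpa using this
      -- u := y z q₂ is the inverse of z, and u² = y q₂
      set u : ZMod q₁ := (y : ZMod q₁) * (z : ZMod q₁) * (q₂ : ZMod q₁) with hu
      have h1 : (y : ZMod q₁) * (z : ZMod q₁) ^ 2 * (q₂ : ZMod q₁) = 1 := by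
        rw [← hyz]; exact hbq
      have hzu : (z : ZMod q₁) * u = 1 := by
        rw [hu]; linear_combination h1
      have hu2 : u ^ 2 = (y : ZMod q₁) * (q₂ : ZMod q₁) := by
        rw [hu]; linear_combination ((y : ZMod q₁) * (q₂ : ZMod q₁)) * h1
      have huunit : IsUnit u := IsUnit.of_mul_eq_one (a := u) (z : ZMod q₁)
        (by rw [mul_comm]; exact hzu)
      set c : ℤ := (u.val : ℤ) with hcdef
      have hc : ((c : ℤ) : ZMod q₁) = u := by
        rw [hcdef]; push_cast; simp [ZMod.natCast_val, ZMod.cast_id]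
      -- Dirichlet approximation
      set M : ℕ := q₁ / N with hMdef
      have hM : 0 < M := Nat.div_pos hlt.le hN
      obtain ⟨j, k, hk0, hkM, hjk⟩ :=
        Real.exists_int_int_abs_mul_sub_le ((c : ℝ) / (q₁ : ℝ)) hM
      set n₀ : ℤ := k * c - j * q₁ with hn₀def
      have hn₀R : (n₀ : ℝ) = ((k : ℝ) * ((c : ℝ) / (q₁ : ℝ)) - (j : ℝ)) * q₁ := by
        rw [hn₀def]; push_cast; field_simp
      have habs : |(n₀ : ℝ)| ≤ (q₁ : ℝ) / ((M : ℝ) + 1) := by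
        rw [hn₀R, abs_mul, abs_of_nonneg hq₁R.le,
          div_eq_mul_one_div (q₁ : ℝ) ((M : ℝ) + 1), mul_comm (q₁ : ℝ)]
        exact mul_le_mul_of_nonneg_right hjk hq₁R.le
      have hq₁ltN : (q₁ : ℝ) < (N : ℝ) * ((M : ℝ) + 1) := by
        have h := Nat.div_add_mod q₁ N
        rw [← hMdef] at h
        have h2 : q₁ % N < N := Nat.mod_lt _ hN
        have h3 : q₁ < N * M + N := by omega
        have h4 : (q₁ : ℝ) < (N : ℝ) * (M : ℝ) + (N : ℝ) := by exact_mod_cast h3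
        nlinarith [h4]
      have hn₀N : |(n₀ : ℝ)| < (N : ℝ) := by
        have hM1 : (0 : ℝ) < (M : ℝ) + 1 := by positivity
        calc |(n₀ : ℝ)| ≤ (q₁ : ℝ) / ((M : ℝ) + 1) := habs
          _ < N := by rw [div_lt_iff₀ hM1]; linarith [hq₁ltN]
      have hn₀Nint : |n₀| < (N : ℤ) := by exact_mod_cast (by push_cast; exact hn₀N :
        ((|n₀| : ℤ) : ℝ) < ((N : ℤ) : ℝ))
      have hn₀cast : ((n₀ : ℤ) : ZMod q₁) = (k : ZMod q₁) * u := by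
        rw [hn₀def]; push_cast; rw [hc, ZMod.natCast_self]; ring
      have hn₀ne : n₀ ≠ 0 := by
        intro h0
        have hk0' : ((k : ℤ) : ZMod q₁) * u = 0 := by rw [← hn₀cast, h0]; simp
        have hkz : ((k : ℤ) : ZMod q₁) = 0 :=
          (huunit.mul_left_eq_zero).mp hk0'
        have hdvd : (q₁ : ℤ) ∣ k := (ZMod.intCast_zmod_eq_zero_iff_dvd _ _).mp hkz
        have hq₁lek : (q₁ : ℤ) ≤ k := Int.le_of_dvd hk0 hdvd
        have hMlt : M < q₁ := by
          calc M = q₁ / N := rfl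
            _ ≤ q₁ / 2 := Nat.div_le_div_left hN2 (by norm_num)
            _ < q₁ := Nat.div_lt_self hq₁ one_lt_two
        have : (M : ℤ) < q₁ := by exact_mod_cast hMlt
        omega
      set x₂ : ℤ := y * k ^ 2 with hx₂def
      have hdiv : (q₁ : ℤ) ∣ n₀ ^ 2 - x₂ * q₂ := by
        have h0 : ((n₀ ^ 2 - x₂ * q₂ : ℤ) : ZMod q₁) = 0 := by
          rw [hx₂def]
          push_cast
          rw [hn₀cast]
          linear_combination ((k : ℤ) : ZMod q₁) ^ 2 * hu2
        exact (ZMod.intCast_zmod_eq_zero_iff_dvd _ _).mp h0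
      set x₁ : ℤ := (n₀ ^ 2 - x₂ * q₂) / q₁ with hx₁def
      have hx₁ : x₁ * q₁ = n₀ ^ 2 - x₂ * q₂ := Int.ediv_mul_cancel hdiv
      clear_value u c M n₀ x₂ x₁
      refine ⟨x₁, x₂, |n₀|, Int.one_le_abs (by simpa using hn₀ne), hn₀Nint.le,
        by rw [sq_abs]; linarith [hx₁], ?_, ?_⟩
      · -- bound on x₂
        have hkMR : (k : ℝ) ≤ M := by exact_mod_cast hkM
        have hk0R : (0 : ℝ) < k := by exact_mod_cast hk0
        have hMN : (M : ℝ) * N ≤ q₁ := by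
          rw [hMdef]; exact_mod_cast Nat.div_mul_le_self q₁ N
        have hyR : |(y : ℝ)| ≤ Hfun q₁ := by exact_mod_cast hy
        have hx₂abs : |(x₂ : ℝ)| = |(y : ℝ)| * (k : ℝ) ^ 2 := by
          rw [hx₂def]; push_cast
          rw [abs_mul, abs_pow, sq_abs]
        rw [le_div_iff₀ (by positivity)]
        have hkN : (k : ℝ) * N ≤ q₁ :=
          le_trans (mul_le_mul_of_nonneg_right hkMR hNR.le) hMN
        have h2 : ((k : ℝ) * N) ^ 2 ≤ (q₁ : ℝ) ^ 2 :=
          pow_le_pow_left₀ (by positivity) hkN 2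
        calc |(x₂ : ℝ)| * (N : ℝ) ^ 2 = |(y : ℝ)| * ((k : ℝ) * N) ^ 2 := by
              rw [hx₂abs]; ring
          _ ≤ (Hfun q₁ : ℝ) * ((k : ℝ) * N) ^ 2 :=
              mul_le_mul_of_nonneg_right hyR (sq_nonneg _)
          _ ≤ (Hfun q₁ : ℝ) * (q₁ : ℝ) ^ 2 :=
              mul_le_mul_of_nonneg_left h2 (by positivity)
      · -- bound on x₁
        refine x1_bound q₁ q₂ N hq₁ x₁ x₂ (n₀ ^ 2) hx₁ ?_
        push_cast
        rw [abs_pow]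
        exact pow_le_pow_left₀ (abs_nonneg _) hn₀N.le 2
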